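/- If G = G₁ *_H G₂ is a nontrivial injective amalgamated free product, then the subgroup j₁(G₁) ⊆ G has infinite index in G. -/
import Mathlib

open Monoid PushoutI CoprodI Function

/-- Auxiliary: construct reduced words representing `(of false g₂ * of true g₁)^k`. -/
theorem amalg_aux
    {H : Type*} {G : Bool → Type*} [∀ b, Group (G b)] [Group H]
    (φ : ∀ b, H →* G b)
    {g₁ : G true} {g₂ : G false}
    (hg₁ : g₁ ∉ (φ true).range) (hg₂ : g₂ ∉ (φ false).range) (k : ℕ) :
    ∃ w : Word G, Reduced φ w ∧
      ofCoprodI w.prod = (PushoutI.of (φ := φ) false g₂ * PushoutI.of (φ := φ) true g₁) ^ k ∧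
      w.fstIdx ≠ some true ∧ (k ≠ 0 → w ≠ .empty) := by
  have hg₁1 : g₁ ≠ 1 := fun h => hg₁ (h ▸ one_mem _)
  have hg₂1 : g₂ ≠ 1 := fun h => hg₂ (h ▸ one_mem _)
  induction k with
  | zero =>
    exact ⟨.empty, by intro g hg; simp [Word.empty] at hg, by simp [Word.empty, Word.prod], by
      simp [Word.empty, Word.fstIdx], by simp⟩
  | succ k ih =>
    obtain ⟨w, hred, hprod, hfst', -⟩ := ih
    set w1 : Word G := Word.cons g₁ w hfst' hg₁1 with hw1
    have hfst1 : w1.fstIdx = some true := Word.fstIdx_cons _ _ _ _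
    have hfst1' : w1.fstIdx ≠ some false := by rw [hfst1]; simp
    set w2 : Word G := Word.cons g₂ w1 hfst1' hg₂1 with hw2
    refine ⟨w2, ?_, ?_, ?_⟩
    · intro g hg
      simp only [hw2, hw1, Word.cons, List.mem_cons] at hg
      rcases hg with rfl | rfl | hg
      · exact hg₂
      · exact hg₁
      · exact hred g hg
    · rw [hw2, Word.prod_cons, hw1, Word.prod_cons, map_mul, map_mul, ofCoprodI_of,
        ofCoprodI_of, hprod, pow_succ']
      group
    · refine ⟨by rw [Word.fstIdx_cons]; simp, fun _ h => ?_⟩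
      have : w2.toList = [] := by rw [h]; rfl
      simp [hw2, Word.cons] at this

/-- Key lemma: nontrivial powers of `of false g₂ * of true g₁` are not in the range of
`of true`. -/
theorem amalg_key
    {H : Type*} {G : Bool → Type*} [∀ b, Group (G b)] [Group H]
    (φ : ∀ b, H →* G b) (hφ : ∀ b, Function.Injective (φ b))
    {g₁ : G true} {g₂ : G false}
    (hg₁ : g₁ ∉ (φ true).range) (hg₂ : g₂ ∉ (φ false).range) {k : ℕ} (hk : k ≠ 0) :
    (PushoutI.of (φ := φ) false g₂ * PushoutI.of (φ := φ) true g₁) ^ k ∉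
      (PushoutI.of (φ := φ) true).range := by
  rintro ⟨g, hg⟩
  obtain ⟨w, hred, hprod, hfst'', hne'⟩ := amalg_aux φ hg₁ hg₂ k
  have hne := hne' hk
  by_cases hgr : g ∈ (φ true).range
  · -- then the power lies in the base range
    obtain ⟨h, rfl⟩ := hgr
    have hmem : ofCoprodI w.prod ∈ (PushoutI.base φ).range := by
      rw [hprod, ← hg, of_apply_eq_base]
      exact ⟨h, rfl⟩
    exact hne (hred.eq_empty_of_mem_range hφ hmem)

  · have hg1 : g ≠ 1 := fun h => hgr (h ▸ one_mem _)
    set w' : Word G := Word.cons g⁻¹ w hfst'' (inv_ne_one.2 hg1) with hw'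
    have hred' : Reduced φ w' := by
      intro x hx
      simp only [hw', Word.cons, List.mem_cons] at hx
      rcases hx with rfl | hx
      · simpa using fun h => hgr ((Subgroup.inv_mem_iff _).1 h)
      · exact hred x hx
    have hmem : ofCoprodI w'.prod ∈ (PushoutI.base φ).range := by
      rw [hw', Word.prod_cons, map_mul, ofCoprodI_of, hprod, map_inv, hg]
      simp only [inv_mul_cancel]
      exact ⟨1, map_one _⟩
    have := hred'.eq_empty_of_mem_range hφ hmem
    have : w'.toList = [] := by rw [this]; rfl
    simp [hw', Word.cons] at this

/-- If `G = G₁ *_H G₂` is a nontrivial injective amalgamated free product, then the subgroup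
`j₁(G₁) ⊆ G` has infinite index in `G` (index `0` in Mathlib's convention). -/
theorem amalgamated_free_product_infinite_index
    {H : Type*} {G : Bool → Type*} [∀ b, Group (G b)] [Group H]
    (φ : ∀ b, H →* G b) (hφ : ∀ b, Function.Injective (φ b))
    (hnontriv : ∀ b, ¬ Function.Bijective (φ b)) :
    (Monoid.PushoutI.of (φ := φ) true).range.index = 0 := by
  -- pick elements not in the ranges
  have hns : ∀ b, ∃ g : G b, g ∉ (φ b).range := by
    intro b
    by_contra h
    push_neg at h
    exact hnontriv b ⟨hφ b, fun g => h g⟩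
  obtain ⟨g₁, hg₁⟩ := hns true
  obtain ⟨g₂, hg₂⟩ := hns false
  set a := PushoutI.of (φ := φ) false g₂ * PushoutI.of (φ := φ) true g₁ with ha
  -- the map n ↦ ⟦a ^ n⟧ into the coset space is injective
  have hinj : Function.Injective
      (fun n : ℕ => (QuotientGroup.mk (a ^ n) :
        Monoid.PushoutI φ ⧸ (Monoid.PushoutI.of (φ := φ) true).range)) := by
    intro n m hnm
    by_contra hne
    wlog hlt : n < m generalizing n m
    · exact this hnm.symm (Ne.symm hne) (by omega)
    rw [QuotientGroup.eq] at hnm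
    have : (a ^ n)⁻¹ * a ^ m = a ^ (m - n) := by
      rw [← zpow_natCast, ← zpow_natCast, ← zpow_natCast, ← zpow_neg, ← zpow_add]
      congr 1
      omega
    rw [this] at hnm
    exact amalg_key φ hφ hg₁ hg₂ (k := m - n) (by omega) hnm
  have : Infinite (Monoid.PushoutI φ ⧸ (Monoid.PushoutI.of (φ := φ) true).range) :=
    Infinite.of_injective _ hinj
  rw [Subgroup.index]
  exact Nat.card_eq_zero_of_infinite
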